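/- Let p be an odd prime, η a nontrivial multiplicative character of F_p extended by η(0)=0, S an invertible symmetric r×r matrix over F_p with r even, and c ∈ F_p. Then Σ_{w ∈ F_p^r} η(w S wᵀ + c) = p^{r/2} · φ((-1)^{r/2} det S) · η(c), where φ is the quadratic character of F_p. -/

import Mathlib

open Matrix

/-- The quadratic character of `ZMod p` with values in `ℂ`. -/
noncomputable def quadCharC (p : ℕ) [Fact p.Prime] : MulChar (ZMod p) ℂ :=
  (quadraticChar (ZMod p)).ringHomComp (Int.castRingHom ℂ)

section Aux

variable {p : ℕ} [Fact p.Prime]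

private lemma addChar_map_sum {ι : Type*} (ψ : AddChar (ZMod p) ℂ) (s : Finset ι)
    (f : ι → ZMod p) : ψ (∑ i ∈ s, f i) = ∏ i ∈ s, ψ (f i) := by
  classical
  induction s using Finset.induction_on with
  | empty => simp
  | insert _ _ h ih => rw [Finset.sum_insert h, Finset.prod_insert h, AddChar.map_add_eq_mul, ih]

private lemma mulChar_ne_zero (χ : MulChar (ZMod p) ℂ) {a : ZMod p} (ha : a ≠ 0) : χ a ≠ 0 := by
  have hu : IsUnit a := isUnit_iff_ne_zero.mpr ha
  lift a to (ZMod p)ˣ using hu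
  rw [← χ.coe_toUnitHom]
  exact (χ.toUnitHom a).ne_zero

private lemma ringChar_zmod_ne_two (hp : p ≠ 2) : ringChar (ZMod p) ≠ 2 := by
  rw [ZMod.ringChar_zmod_n]; exact hp

private lemma fourier_lemma (ψ : AddChar (ZMod p) ℂ)
    (η : MulChar (ZMod p) ℂ) (hη : η ≠ 1) (y : ZMod p) :
    ∑ b : ZMod p, η⁻¹ b * ψ (b * y) = η y * gaussSum η⁻¹ ψ := by
  have hηinv : η⁻¹ ≠ 1 := fun h => hη (inv_eq_one.mp h)
  rcases eq_or_ne y 0 with rfl | hy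
  · simp only [mul_zero, AddChar.map_zero_eq_one, mul_one]
    rw [MulChar.sum_eq_zero_of_ne_one hηinv,
      MulChar.map_nonunit η not_isUnit_zero, zero_mul]
  · lift y to (ZMod p)ˣ using isUnit_iff_ne_zero.mpr hy
    have h1 : ∑ b : ZMod p, η⁻¹ b * ψ (b * (y : ZMod p))
        = gaussSum η⁻¹ (ψ.mulShift (y : ZMod p)) := by
      simp only [gaussSum, AddChar.mulShift_apply]
      exact Finset.sum_congr rfl fun b _ => by rw [mul_comm (y : ZMod p) b]
    have h2 := gaussSum_mulShift η⁻¹ ψ y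
    have h3 : η⁻¹ (y : ZMod p) ≠ 0 := mulChar_ne_zero _ (Units.ne_zero y)
    apply mul_left_cancel₀ h3
    rw [h1, h2, ← mul_assoc]
    have h4 : η⁻¹ (y : ZMod p) * η (y : ZMod p) = 1 := by
      rw [← MulChar.mul_apply, inv_mul_cancel, MulChar.one_apply (y.isUnit)]
    rw [h4, one_mul]

private lemma quadCharC_apply (a : ZMod p) :
    quadCharC p a = ((quadraticChar (ZMod p) a : ℤ) : ℂ) := by
  simp [quadCharC, MulChar.ringHomComp_apply, Int.coe_castRingHom]

private lemma quadCharC_ne_one (hp : p ≠ 2) : quadCharC p ≠ 1 := by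
  intro h
  have hq := quadraticChar_ne_one (F := ZMod p) (ringChar_zmod_ne_two hp)
  apply hq
  ext a
  have h1 := congrArg (fun χ : MulChar (ZMod p) ℂ => χ (a : ZMod p)) h
  simp only [quadCharC_apply, MulChar.one_apply a.isUnit] at h1 ⊢
  exact_mod_cast h1

private lemma quadCharC_isQuadratic : (quadCharC p).IsQuadratic :=
  (quadraticChar_isQuadratic (ZMod p)).comp _

private lemma quadCharC_sq_self {a : ZMod p} (ha : a ≠ 0) :
    quadCharC p a * quadCharC p a = 1 := by
  rcases quadCharC_isQuadratic (p := p) a with h | h | h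
  · exact absurd h (mulChar_ne_zero _ ha)
  · rw [h]; ring
  · rw [h]; ring

private lemma quadCharC_sq' {a : ZMod p} (ha : a ≠ 0) :
    quadCharC p (a ^ 2) = 1 := by
  rw [map_pow, sq, quadCharC_sq_self ha]

/-- The key single-variable Gauss-sum computation. -/
private lemma sq_char_sum (hp : p ≠ 2) (ψ : AddChar (ZMod p) ℂ) (hψ : ψ.IsPrimitive)
    {a : ZMod p} (ha : a ≠ 0) :
    ∑ x : ZMod p, ψ (a * x ^ 2) = quadCharC p a * gaussSum (quadCharC p) ψ := by
  classical
  have hcard : ∀ t : ZMod p,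
      ((Fintype.card {x : ZMod p // x ^ 2 = t} : ℂ)) = 1 + quadCharC p t := by
    intro t
    have h1 := quadraticChar_card_sqrts (ringChar_zmod_ne_two hp) t
    have h2 : {x : ZMod p | x ^ 2 = t}.toFinset.card
        = Fintype.card {x : ZMod p // x ^ 2 = t} := Set.toFinset_card _
    rw [h2] at h1
    have h3 := congrArg (fun z : ℤ => (z : ℂ)) h1
    push_cast at h3
    rw [h3, quadCharC_apply]
    ring
  have step1 : ∑ x : ZMod p, ψ (a * x ^ 2)
      = ∑ t : ZMod p, (1 + quadCharC p t) * ψ (a * t) := by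
    rw [← Fintype.sum_fiberwise (fun x : ZMod p => x ^ 2) (fun x => ψ (a * x ^ 2))]
    refine Finset.sum_congr rfl fun t _ => ?_
    have : ∀ x : {x : ZMod p // x ^ 2 = t}, ψ (a * (x : ZMod p) ^ 2) = ψ (a * t) := by
      rintro ⟨x, hx⟩; rw [hx]
    rw [Finset.sum_congr rfl fun x _ => this x, Finset.sum_const, Finset.card_univ,
      nsmul_eq_mul, hcard]
  have hsum0 : ∑ t : ZMod p, ψ (a * t) = 0 := by
    have := AddChar.sum_eq_zero_of_ne_one (hψ ha)
    simpa only [AddChar.mulShift_apply] using this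
  have hg : ∑ t : ZMod p, quadCharC p t * ψ (a * t)
      = gaussSum (quadCharC p) (ψ.mulShift a) := by
    simp only [gaussSum, AddChar.mulShift_apply]
  have step2 : ∑ t : ZMod p, (1 + quadCharC p t) * ψ (a * t)
      = gaussSum (quadCharC p) (ψ.mulShift a) := by
    simp only [add_mul, one_mul, Finset.sum_add_distrib, hsum0, zero_add, hg]
  rw [step1, step2]
  have hu : IsUnit a := isUnit_iff_ne_zero.mpr ha
  have h2 := gaussSum_mulShift (quadCharC p) ψ hu.unit
  rw [IsUnit.unit_spec] at h2
  have hχa : quadCharC p a ≠ 0 := mulChar_ne_zero _ ha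
  apply mul_left_cancel₀ hχa
  rw [h2, ← mul_assoc, quadCharC_sq_self ha, one_mul]

/-- The character sum over a diagonal quadratic form of even rank. -/
private lemma diag_sum (hp : p ≠ 2) (η : MulChar (ZMod p) ℂ) (hη : η ≠ 1)
    {r : ℕ} (hr : Even r) (d : Fin r → ZMod p) (hd : ∀ i, d i ≠ 0) (c : ZMod p) :
    ∑ x : Fin r → ZMod p, η ((∑ i, d i * x i ^ 2) + c)
      = (p : ℂ) ^ (r / 2) * quadCharC p ((-1 : ZMod p) ^ (r / 2) * ∏ i, d i) * η c := by
  classical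
  obtain ⟨m, hm⟩ := hr
  have hm2 : r = 2 * m := by omega
  have hm' : r / 2 = m := by omega
  set ψ := AddChar.FiniteField.primitiveChar_to_Complex (ZMod p) with hψdef
  have hψ : ψ.IsPrimitive := AddChar.FiniteField.primitiveChar_to_Complex_isPrimitive (ZMod p)
  have hηinv : η⁻¹ ≠ 1 := fun h => hη (inv_eq_one.mp h)
  have hcardC : ((Fintype.card (ZMod p) : ℂ)) ≠ 0 := by
    rw [ZMod.card]
    exact_mod_cast (Fact.out : p.Prime).ne_zero
  set g := gaussSum η⁻¹ ψ with hgdef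
  have hg : g ≠ 0 := gaussSum_ne_zero_of_nontrivial hcardC hηinv hψ
  set gφ := gaussSum (quadCharC p) ψ with hgφdef
  have hgφ2 : gφ ^ 2 = quadCharC p (-1) * (p : ℂ) := by
    have := gaussSum_sq (quadCharC_ne_one hp) quadCharC_isQuadratic hψ
    rwa [ZMod.card] at this
  -- inner sum for b ≠ 0
  have hb : ∀ b : ZMod p, b ≠ 0 →
      ∑ x : Fin r → ZMod p, ψ (b * ∑ i, d i * x i ^ 2)
        = quadCharC p (∏ i, d i) * gφ ^ r := by
    intro b hb0
    have e1 : ∀ x : Fin r → ZMod p,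
        ψ (b * ∑ i, d i * x i ^ 2) = ∏ i, ψ (b * d i * x i ^ 2) := by
      intro x
      rw [Finset.mul_sum, addChar_map_sum]
      exact Finset.prod_congr rfl fun i _ => by rw [mul_assoc]
    calc ∑ x : Fin r → ZMod p, ψ (b * ∑ i, d i * x i ^ 2)
        = ∑ x : Fin r → ZMod p, ∏ i, ψ (b * d i * x i ^ 2) :=
          Finset.sum_congr rfl fun x _ => e1 x
      _ = ∏ i, ∑ t : ZMod p, ψ (b * d i * t ^ 2) :=
          (Fintype.prod_sum fun i t => ψ (b * d i * t ^ 2)).symm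
      _ = ∏ i, (quadCharC p (b * d i) * gφ) :=
          Finset.prod_congr rfl fun i _ =>
            sq_char_sum hp ψ hψ (mul_ne_zero hb0 (hd i))
      _ = (∏ i, quadCharC p (b * d i)) * gφ ^ r := by
          rw [Finset.prod_mul_distrib, Finset.prod_const, Finset.card_univ, Fintype.card_fin]
      _ = quadCharC p (∏ i, d i) * gφ ^ r := by
          congr 1
          have hpow : quadCharC p b ^ r = 1 := by
            rw [hm2, pow_mul, sq, quadCharC_sq_self hb0, one_pow]
          calc ∏ i, quadCharC p (b * d i)
              = quadCharC p (∏ i, (b * d i)) := (map_prod (quadCharC p) _ _).symm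
            _ = quadCharC p (b ^ r * ∏ i, d i) := by
                rw [Finset.prod_mul_distrib, Finset.prod_const, Finset.card_univ,
                  Fintype.card_fin]
            _ = quadCharC p (∏ i, d i) := by
                rw [_root_.map_mul, map_pow, hpow, one_mul]
  have key : ∀ y : ZMod p, ∑ b : ZMod p, η⁻¹ b * ψ (b * y) = η y * g :=
    fourier_lemma ψ η hη
  set K := quadCharC p (∏ i, d i) * gφ ^ r with hKdef
  have main : g * (∑ x : Fin r → ZMod p, η ((∑ i, d i * x i ^ 2) + c)) = K * (η c * g) := by
    calc g * (∑ x : Fin r → ZMod p, η ((∑ i, d i * x i ^ 2) + c))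
        = ∑ x : Fin r → ZMod p, η ((∑ i, d i * x i ^ 2) + c) * g := by
          rw [Finset.mul_sum]; exact Finset.sum_congr rfl fun x _ => mul_comm _ _
      _ = ∑ x : Fin r → ZMod p, ∑ b : ZMod p,
            η⁻¹ b * ψ (b * ((∑ i, d i * x i ^ 2) + c)) := by
          exact Finset.sum_congr rfl fun x _ => (key _).symm
      _ = ∑ b : ZMod p, ∑ x : Fin r → ZMod p,
            η⁻¹ b * ψ (b * ((∑ i, d i * x i ^ 2) + c)) := Finset.sum_comm
      _ = ∑ b : ZMod p, η⁻¹ b * ψ (b * c) *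
            ∑ x : Fin r → ZMod p, ψ (b * ∑ i, d i * x i ^ 2) := by
          refine Finset.sum_congr rfl fun b _ => ?_
          rw [Finset.mul_sum]
          refine Finset.sum_congr rfl fun x _ => ?_
          rw [mul_add, AddChar.map_add_eq_mul]
          ring
      _ = ∑ b : ZMod p, η⁻¹ b * ψ (b * c) * K := by
          refine Finset.sum_congr rfl fun b _ => ?_
          rcases eq_or_ne b 0 with rfl | hb0
          · rw [MulChar.map_nonunit η⁻¹ not_isUnit_zero, zero_mul, zero_mul, zero_mul]
          · rw [hb b hb0]
      _ = K * ∑ b : ZMod p, η⁻¹ b * ψ (b * c) := by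
          rw [← Finset.sum_mul, mul_comm]
      _ = K * (η c * g) := by rw [key c]
  have final : (∑ x : Fin r → ZMod p, η ((∑ i, d i * x i ^ 2) + c)) = K * η c := by
    apply mul_left_cancel₀ hg
    rw [main]; ring
  rw [final, hKdef]
  have hgφr : gφ ^ r = quadCharC p ((-1 : ZMod p) ^ m) * (p : ℂ) ^ m := by
    rw [hm2, pow_mul, hgφ2, mul_pow, map_pow]
  rw [hgφr, hm', _root_.map_mul]
  ring

/-- Diagonalization of a symmetric matrix over `ZMod p`, `p` odd. -/
private lemma exists_congr_diagonal (hp : p ≠ 2) {r : ℕ}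
    (S : Matrix (Fin r) (Fin r) (ZMod p)) (hS : Sᵀ = S) :
    ∃ (P : Matrix (Fin r) (Fin r) (ZMod p)) (d : Fin r → ZMod p),
      IsUnit P.det ∧ Pᵀ * S * P = Matrix.diagonal d := by
  classical
  have h2 : (2 : ZMod p) ≠ 0 := Ring.two_ne_zero (ringChar_zmod_ne_two hp)
  haveI : Invertible (2 : ZMod p) := invertibleOfNonzero h2
  set B : LinearMap.BilinForm (ZMod p) (Fin r → ZMod p) := Matrix.toBilin' S with hBdef
  have hBsymm : LinearMap.IsSymm B := by
    rw [LinearMap.isSymm_def]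
    intro x y
    simp only [RingHom.id_apply, hBdef, Matrix.toBilin'_apply']
    rw [Matrix.dotProduct_mulVec, ← Matrix.mulVec_transpose, hS, dotProduct_comm]
  obtain ⟨v, hv⟩ := LinearMap.BilinForm.exists_orthogonal_basis hBsymm
  have hrk : Module.finrank (ZMod p) (Fin r → ZMod p) = r := Module.finrank_fin_fun _
  let v' : Module.Basis (Fin r) (ZMod p) (Fin r → ZMod p) := v.reindex (finCongr hrk)
  have hv' : ∀ i j : Fin r, i ≠ j → B (v' i) (v' j) = 0 := by
    intro i j hij
    simp only [v', Module.Basis.coe_reindex, Function.comp_apply]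
    exact hv (fun h => hij (by simpa using congrArg (finCongr hrk) h))
  let b : Module.Basis (Fin r) (ZMod p) (Fin r → ZMod p) := Pi.basisFun (ZMod p) (Fin r)
  let P : Matrix (Fin r) (Fin r) (ZMod p) := b.toMatrix ⇑v'
  haveI : Invertible P := b.invertibleToMatrix v'
  refine ⟨P, fun i => B (v' i) (v' i), Matrix.isUnit_det_of_invertible P, ?_⟩
  have hSB : LinearMap.BilinForm.toMatrix b B = S := by
    rw [show b = Pi.basisFun (ZMod p) (Fin r) from rfl, LinearMap.BilinForm.toMatrix_basisFun, hBdef]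
    exact LinearMap.BilinForm.toMatrix'_toBilin' S
  have key := LinearMap.BilinForm.toMatrix_mul_basis_toMatrix b v' B
  rw [hSB] at key
  rw [key]
  ext i j
  rcases eq_or_ne i j with rfl | hij
  · rw [Matrix.diagonal_apply_eq, LinearMap.BilinForm.toMatrix_apply]
  · rw [Matrix.diagonal_apply_ne _ hij, LinearMap.BilinForm.toMatrix_apply]
    exact hv' i j hij

end Aux

/-- Lemma 5.3, even-rank case: for `p` an odd prime, `η` a nontrivial multiplicative
character of `F_p`, `S` an invertible symmetric `r × r` matrix with `r` even, and
`c ∈ F_p`, `∑_{w ∈ F_p^r} η(w S wᵀ + c) = p^(r/2) φ((-1)^(r/2) det S) η(c)`. -/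
theorem charSum_quadForm_even_rank (p r : ℕ) [Fact p.Prime] (hp : p ≠ 2)
    (η : MulChar (ZMod p) ℂ) (hη : η ≠ 1) (hr : Even r) (hr0 : 0 < r)
    (S : Matrix (Fin r) (Fin r) (ZMod p)) (hS : Sᵀ = S) (hSdet : IsUnit S.det)
    (c : ZMod p) :
    (∑ w : Fin r → ZMod p, η (dotProduct w (S.mulVec w) + c)) =
      (p : ℂ) ^ (r / 2) * quadCharC p ((-1 : ZMod p) ^ (r / 2) * S.det) * η c := by
  classical
  obtain ⟨P, d, hPdet, hcong⟩ := exists_congr_diagonal hp S hS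
  haveI : Invertible P := P.invertibleOfIsUnitDet hPdet
  have hdet : (∏ i, d i) = P.det ^ 2 * S.det := by
    have h1 : (Matrix.diagonal d).det = Pᵀ.det * S.det * P.det := by
      rw [← hcong, Matrix.det_mul, Matrix.det_mul]
    rw [Matrix.det_diagonal] at h1
    rw [h1, Matrix.det_transpose]; ring
  have hd : ∀ i, d i ≠ 0 := by
    have hprod : (∏ i, d i) ≠ 0 := by
      rw [hdet]
      exact mul_ne_zero (pow_ne_zero _ hPdet.ne_zero) hSdet.ne_zero
    intro i hi
    exact hprod (Finset.prod_eq_zero (Finset.mem_univ i) hi)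
  have hbij : Function.Bijective P.mulVec :=
    ⟨Matrix.mulVec_injective_of_invertible P, Matrix.mulVec_surjective_of_invertible P⟩
  have hQ : ∀ x : Fin r → ZMod p,
      dotProduct (P.mulVec x) (S.mulVec (P.mulVec x)) = ∑ i, d i * x i ^ 2 := by
    intro x
    rw [Matrix.mulVec_mulVec, Matrix.dotProduct_mulVec, ← Matrix.vecMul_transpose,
      Matrix.vecMul_vecMul, ← Matrix.mul_assoc, hcong]
    simp only [Matrix.vecMul_diagonal, dotProduct]
    exact Finset.sum_congr rfl fun i _ => by ring
  have hsum := Fintype.sum_bijective P.mulVec hbij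
    (fun x => η (dotProduct (P.mulVec x) (S.mulVec (P.mulVec x)) + c))
    (fun w => η (dotProduct w (S.mulVec w) + c)) (fun x => rfl)
  rw [← hsum]
  have hstep : ∀ x : Fin r → ZMod p,
      η (dotProduct (P.mulVec x) (S.mulVec (P.mulVec x)) + c)
        = η ((∑ i, d i * x i ^ 2) + c) := fun x => by rw [hQ x]
  rw [Finset.sum_congr rfl fun x _ => hstep x, diag_sum hp η hη hr d hd c]
  have hrw : (-1 : ZMod p) ^ (r / 2) * ∏ i, d i
      = ((-1 : ZMod p) ^ (r / 2) * S.det) * P.det ^ 2 := by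
    rw [hdet]; ring
  rw [hrw, _root_.map_mul, quadCharC_sq' hPdet.ne_zero, mul_one]
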